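/- Let D ∈ 𝔇_n be a diagram with n boxes and no empty rows or columns, and let T be the standard tableau on D filled by reading integers 1,...,n along columns from bottom to top starting with the leftmost column. Let read(T) be the word obtained by reading entries of T along rows right to left starting with the lowermost row, viewed as a permutation in S_n. Then w_0 · read(T)⁻¹ is a minimal element of Σ_R(P_D) with respect to right weak order, i.e., w_0·read(T)⁻¹ · s_i ∉ Σ_R(P_D) for every right descent i of w_0·read(T)⁻¹. -/

import Mathlib

open Equiv

/-- Coxeter length of a permutation = number of inversions. -/
def len {n : ℕ} (σ : Perm (Fin n)) : ℕ :=
  (Finset.univ.filter fun p : Fin n × Fin n => p.1 < p.2 ∧ σ p.2 < σ p.1).card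

/-- The simple transposition `s_i = (i, i+1)` (0-indexed). -/
def simpleT {n : ℕ} (i : ℕ) (h : i + 1 < n) : Perm (Fin n) :=
  Equiv.swap ⟨i, Nat.lt_of_succ_lt h⟩ ⟨i + 1, h⟩

/-- `e` enumerates boxes along the rows from left to right (increasing `x`),
starting with the uppermost row (decreasing `y`): the row-reading enumeration
defining the labeling of the canonical poset `P_D`. -/
def RowEnum {n : ℕ} (e : Fin n → ℕ × ℕ) : Prop :=
  ∀ i j : Fin n, i < j ↔ ((e j).2 < (e i).2 ∨ ((e i).2 = (e j).2 ∧ (e i).1 < (e j).1))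

/-- `t` enumerates boxes along the columns from bottom to top, starting with the
leftmost column: the filling order of the sink standard tableau. -/
def ColEnum {n : ℕ} (t : Fin n → ℕ × ℕ) : Prop :=
  ∀ i j : Fin n, i < j ↔ ((t i).1 < (t j).1 ∨ ((t i).1 = (t j).1 ∧ (t i).2 < (t j).2))

/-- `r` enumerates boxes along the rows from right to left (decreasing `x`),
starting with the lowermost row (increasing `y`): the reading order of `read`. -/
def ReadEnum {n : ℕ} (r : Fin n → ℕ × ℕ) : Prop :=
  ∀ i j : Fin n, i < j ↔ ((r i).2 < (r j).2 ∨ ((r i).2 = (r j).2 ∧ (r j).1 < (r i).1))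

/-- Membership in `𝔇_n`: no empty rows or columns. -/
def DiagOK (D : Finset (ℕ × ℕ)) : Prop :=
  (∃ l, D.image Prod.fst = Finset.Icc 1 l) ∧ (∃ k, D.image Prod.snd = Finset.Icc 1 k)

/-- `Σ_R(P_D)` for the canonical poset `P_D` (labeled via the row-reading
enumeration `e`): `i ≺ j` iff `x_i ≤ x_j`, `y_i ≤ y_j` and `i ≠ j`. -/
def SigmaRD {n : ℕ} (e : Fin n → ℕ × ℕ) : Set (Perm (Fin n)) :=
  {γ | ∀ i j : Fin n,
    ((e i).1 ≤ (e j).1 ∧ (e i).2 ≤ (e j).2 ∧ i ≠ j) → γ⁻¹ i < γ⁻¹ j}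

/-- row-reading comparison -/
def RP (a b : ℕ × ℕ) : Prop := b.2 < a.2 ∨ (a.2 = b.2 ∧ a.1 < b.1)

lemma enum_ext {n : ℕ} (f g : Fin n → ℕ × ℕ)
    (hf : ∀ i j : Fin n, i < j ↔ RP (f i) (f j))
    (hg : ∀ i j : Fin n, i < j ↔ RP (g i) (g j))
    (hrange : Set.range f = Set.range g) : f = g := by
  have hfinj : Function.Injective f := by
    intro x y h
    by_contra hne
    rcases lt_or_gt_of_ne hne with hlt | hlt
    · have := (hf x y).mp hlt; rw [h] at this; unfold RP at this; omega
    · have := (hf y x).mp hlt; rw [h] at this; unfold RP at this; omega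
  have hginj : Function.Injective g := by
    intro x y h
    by_contra hne
    rcases lt_or_gt_of_ne hne with hlt | hlt
    · have := (hg x y).mp hlt; rw [h] at this; unfold RP at this; omega
    · have := (hg y x).mp hlt; rw [h] at this; unfold RP at this; omega
  suffices h : ∀ N : ℕ, ∀ j : Fin n, (j : ℕ) < N → f j = g j by
    funext j; exact h (j + 1) j (Nat.lt_succ_self _)
  intro N
  induction N with
  | zero => intro j h; omega
  | succ N ih =>
    intro j hj
    rcases Nat.lt_or_ge (j : ℕ) N with h | h
    · exact ih j h
    have hjN : (j : ℕ) = N := by omega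
    obtain ⟨m, hm⟩ : g j ∈ Set.range f := hrange.symm.subset (Set.mem_range_self j)
    obtain ⟨m', hm'⟩ : f j ∈ Set.range g := hrange.subset (Set.mem_range_self j)
    rcases lt_trichotomy m j with h1 | h1 | h1
    · exfalso
      have hgm : g m = g j := by rw [← ih m (by omega), hm]
      exact absurd (hginj hgm) h1.ne
    · exact h1 ▸ hm
    · rcases lt_trichotomy m' j with h2 | h2 | h2
      · exfalso
        have hfm : f m' = f j := by rw [ih m' (by omega), hm']
        exact absurd (hfinj hfm) h2.ne
      · exact (h2 ▸ hm').symm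
      · exfalso
        have r1 : RP (f j) (g j) := by rw [← hm]; exact (hf j m).mp h1
        have r2 : RP (g j) (f j) := by rw [← hm']; exact (hg j m').mp h2
        unfold RP at r1 r2; omega

lemma descent_of_len {n : ℕ} (u : Perm (Fin n)) (i : ℕ) (hi : i + 1 < n)
    (h : len (u * simpleT i hi) < len u) :
    u ⟨i + 1, hi⟩ < u ⟨i, Nat.lt_of_succ_lt hi⟩ := by
  set a : Fin n := ⟨i, Nat.lt_of_succ_lt hi⟩ with hadef
  set b : Fin n := ⟨i + 1, hi⟩ with hbdef
  by_contra hcon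
  push_neg at hcon
  have hne : u a ≠ u b := by
    intro h'
    have := u.injective h'
    rw [hadef, hbdef] at this
    simp [Fin.ext_iff] at this
  have hab : u a < u b := lt_of_le_of_ne hcon hne
  apply absurd h
  push_neg
  unfold len
  have key : ∀ x : Fin n, ((Equiv.swap a b) x : ℕ)
      = if (x : ℕ) = i then i + 1 else if (x : ℕ) = i + 1 then i else x := by
    intro x
    rcases eq_or_ne x a with rfl | hxa
    · simp [Equiv.swap_apply_left, hadef, hbdef]
    · rcases eq_or_ne x b with rfl | hxb
      · rw [Equiv.swap_apply_right]
        rw [hbdef, hadef]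
        simp
      · rw [Equiv.swap_apply_of_ne_of_ne hxa hxb]
        rw [if_neg (fun hx => hxa (Fin.ext hx)), if_neg (fun hx => hxb (Fin.ext hx))]
  have hs : ∀ x, (u * simpleT i hi) (simpleT i hi x) = u x := by
    intro x
    simp [simpleT, Equiv.Perm.mul_apply, Equiv.swap_apply_self]
  apply Finset.card_le_card_of_injOn (fun p => (simpleT i hi p.1, simpleT i hi p.2))
  · intro p hp
    simp only [Finset.mem_coe, Finset.mem_filter, Finset.mem_univ, true_and] at hp ⊢
    obtain ⟨h1, h2⟩ := hp
    refine ⟨?_, ?_⟩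
    · have hnotab : ¬ ((p.1 : ℕ) = i ∧ (p.2 : ℕ) = i + 1) := by
        rintro ⟨x1, x2⟩
        have hp1 : p.1 = a := Fin.ext x1
        have hp2 : p.2 = b := Fin.ext x2
        rw [hp1, hp2] at h2
        exact absurd h2 (not_lt.mpr hab.le)
      show (Equiv.swap a b) p.1 < (Equiv.swap a b) p.2
      rw [Fin.lt_def, key, key]
      have hp12 : (p.1 : ℕ) < (p.2 : ℕ) := h1
      have hn2 : (p.2 : ℕ) < n := p.2.isLt
      split_ifs <;> omega
    · show (u * simpleT i hi) (simpleT i hi p.2) < (u * simpleT i hi) (simpleT i hi p.1)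
      rw [hs, hs]; exact h2
  · intro p hp q hq hpq
    simp only [Prod.mk.injEq] at hpq
    exact Prod.ext ((simpleT i hi).injective hpq.1) ((simpleT i hi).injective hpq.2)

/-- Let `D ∈ 𝔇_n`, let `T` be the sink standard tableau of `D` (filled along
columns bottom-to-top, leftmost column first, i.e. value `k` sits in box `t k`),
and let `w = read(T)` (reading along rows right-to-left from the lowermost row,
i.e. `t (w p) = r p`).  Then `w₀ w⁻¹` is minimal in `Σ_R(P_D)` for the right
weak order: `(w₀ w⁻¹) sᵢ ∉ Σ_R(P_D)` for every right descent `i` of `w₀ w⁻¹`. -/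
theorem sink_reading_word_minimal {n : ℕ} (D : Finset (ℕ × ℕ)) (hcard : D.card = n)
    (hD : DiagOK D)
    (e t r : Fin n → ℕ × ℕ)
    (he : RowEnum e) (hre : Set.range e = ↑D)
    (ht : ColEnum t) (hrt : Set.range t = ↑D)
    (hr : ReadEnum r) (hrr : Set.range r = ↑D)
    (w : Perm (Fin n)) (hw : ∀ p : Fin n, t (w p) = r p)
    (i : ℕ) (hi : i + 1 < n)
    (hdesc : len ((Fin.revPerm * w⁻¹) * simpleT i hi) < len (Fin.revPerm * w⁻¹)) :
    (Fin.revPerm * w⁻¹) * simpleT i hi ∉ SigmaRD e := by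
  intro hmem
  simp only [SigmaRD, Set.mem_setOf_eq] at hmem
  set a : Fin n := ⟨i, Nat.lt_of_succ_lt hi⟩ with hadef
  set b : Fin n := ⟨i + 1, hi⟩ with hbdef
  have hab : a < b := by
    rw [hadef, hbdef, Fin.lt_def]
    simp
  -- Step A: the descent implies w⁻¹ a < w⁻¹ b
  have hA := descent_of_len (Fin.revPerm * w⁻¹) i hi hdesc
  have hpq : w⁻¹ a < w⁻¹ b := by
    rw [← hadef, ← hbdef] at hA
    simp only [Equiv.Perm.mul_apply, Fin.revPerm_apply] at hA
    exact (Fin.rev_lt_rev).mp hA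
  set p := w⁻¹ a with hpdef
  set q := w⁻¹ b with hqdef
  have hwp : w p = a := w.apply_symm_apply a
  have hwq : w q = b := w.apply_symm_apply b
  have hta : t a = r p := by rw [← hwp]; exact hw p
  have htb : t b = r q := by rw [← hwq]; exact hw q
  -- Step B: boxes t a, t b are componentwise comparable
  have hcol := (ht a b).mp hab
  have hread := (hr p q).mp hpq
  rw [← hta, ← htb] at hread
  have hxy : (t a).1 ≤ (t b).1 ∧ (t a).2 < (t b).2 := by
    rcases hcol with h1 | ⟨h1, h2⟩ <;> rcases hread with h3 | ⟨h3, h4⟩ <;>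
      exact ⟨by omega, by omega⟩
  -- injectivity of t
  have hinj_t : Function.Injective t := by
    intro x y hxy'
    by_contra hne
    rcases lt_or_gt_of_ne hne with h | h
    · have := (ht x y).mp h; rw [hxy'] at this; omega
    · have := (ht y x).mp h; rw [hxy'] at this; omega
  -- Step C : e = r ∘ rev
  have herev : ∀ j : Fin n, r (Fin.rev j) = e j := by
    have heq : e = fun j : Fin n => r (Fin.rev j) := by
      apply enum_ext
      · exact he
      · intro x y
        rw [show (x < y) ↔ Fin.rev y < Fin.rev x from (Fin.rev_lt_rev).symm, hr]
        unfold RP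
        constructor
        · rintro (h | ⟨h1, h2⟩)
          · exact Or.inl h
          · exact Or.inr ⟨h1.symm, h2⟩
        · rintro (h | ⟨h1, h2⟩)
          · exact Or.inl h
          · exact Or.inr ⟨h1.symm, h2⟩
      · rw [hre]
        have hsur : Set.range (fun j : Fin n => r (Fin.rev j)) = Set.range r := by
          apply Function.Surjective.range_comp
          exact fun y => ⟨Fin.rev y, by simp⟩
        rw [hsur, hrr]
    intro j
    rw [heq]
  -- Step D : pick the poset labels of the boxes t a and t b
  obtain ⟨j, hj⟩ : t a ∈ Set.range e := by
    rw [hre]; rw [← hrt]; exact Set.mem_range_self a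
  obtain ⟨k, hk⟩ : t b ∈ Set.range e := by
    rw [hre]; rw [← hrt]; exact Set.mem_range_self b
  have hjk : j ≠ k := by
    intro hh
    have htt : t a = t b := by rw [← hj, hh, hk]
    rw [htt] at hxy
    exact absurd hxy.2 (lt_irrefl _)
  have hmemjk := hmem j k ⟨by rw [hj, hk]; exact hxy.1, by rw [hj, hk]; exact hxy.2.le, hjk⟩
  -- compute the images of j and k under the inverse
  have hwj : w (Fin.rev j) = a := by
    apply hinj_t
    rw [hw, herev]
    exact hj
  have hwk : w (Fin.rev k) = b := by
    apply hinj_t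
    rw [hw, herev]
    exact hk
  have hginv : ∀ x : Fin n, ((Fin.revPerm * w⁻¹ * simpleT i hi : Perm (Fin n))⁻¹) x
      = (simpleT i hi) (w (Fin.rev x)) := by
    intro x
    apply (Fin.revPerm * w⁻¹ * simpleT i hi : Perm (Fin n)).injective
    rw [Equiv.Perm.coe_inv, Equiv.apply_symm_apply]
    simp only [Equiv.Perm.mul_apply, simpleT, Equiv.swap_apply_self,
      Equiv.Perm.coe_inv, Equiv.symm_apply_apply, Fin.revPerm_apply, Fin.rev_rev]
  rw [hginv, hginv, hwj, hwk] at hmemjk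
  have hsa : (simpleT i hi) a = b := by
    rw [hadef, hbdef]
    simp [simpleT]
  have hsb : (simpleT i hi) b = a := by
    rw [hadef, hbdef]
    simp [simpleT]
  rw [hsa, hsb] at hmemjk
  exact absurd hmemjk (asymm hab)
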